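/- arXiv:2311.08477 — 4 statements merged into one kernel-verified Lean document; each statement's English description precedes it below -/
import Mathlib

section
/- The T-linear map from M = (T·dx ⊕ T·dy)/(x·dy+y·dx) to ℂ[s]·ds ⊕ ℂ[t]·dt sending dx ↦ (ds,0) and dy ↦ (0,dt) is surjective with kernel generated by x·dy. -/
/- STATEMENT 2: The T-linear map from M = (T·dx ⊕ T·dy)/(x·dy+y·dx) to
   ℂ[s]·ds ⊕ ℂ[t]·dt sending dx ↦ (ds,0), dy ↦ (0,dt) is surjective with
   kernel generated by x·dy.  The target is a T-module via the normalization
   map φ : T → ℂ[s] × ℂ[t].  We state this at the level of the presentation: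
   F : T × T → ℂ[s] × ℂ[t], F(a,b) = ((φ a)₁, (φ b)₂) is additive,
   T-linear for the twisted action, surjective, and F v = 0 iff v lies in
   the relation submodule together with the T-span of (0, x) (= x·dy). -/

noncomputable section
open MvPolynomial

abbrev P : Type := MvPolynomial (Fin 2) ℂ

abbrev T : Type := P ⧸ Ideal.span ({X 0 * X 1} : Set P)

def x : T := Ideal.Quotient.mk _ (X 0)
def y : T := Ideal.Quotient.mk _ (X 1)

def rel : Submodule T (T × T) := Submodule.span T {(y, x)}

/-- The normalization map T → ℂ[s] × ℂ[t], x ↦ (s, 0), y ↦ (0, t). -/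
def φ : T →+* Polynomial ℂ × Polynomial ℂ :=
  Ideal.Quotient.lift _
    (aeval ![((Polynomial.X : Polynomial ℂ), 0), (0, (Polynomial.X : Polynomial ℂ))]).toRingHom
    (by
      intro a ha
      rw [Ideal.mem_span_singleton] at ha
      obtain ⟨c, rfl⟩ := ha
      simp [Prod.ext_iff])

/-- The map dx ↦ (ds, 0), dy ↦ (0, dt) on the presentation T·dx ⊕ T·dy. -/
def F : T × T → Polynomial ℂ × Polynomial ℂ := fun v => ((φ v.1).1, (φ v.2).2)

/-! ### Auxiliary lemmas -/

def vmat : Fin 2 → Polynomial ℂ × Polynomial ℂ :=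
  ![((Polynomial.X : Polynomial ℂ), 0), (0, (Polynomial.X : Polynomial ℂ))]

lemma φ_mk (A : P) : φ (Ideal.Quotient.mk _ A) = aeval vmat A := rfl

lemma φ_x : φ x = ((Polynomial.X : Polynomial ℂ), 0) := by
  rw [x, φ_mk, aeval_X]; rfl

lemma φ_y : φ y = ((0 : Polynomial ℂ), (Polynomial.X : Polynomial ℂ)) := by
  rw [y, φ_mk, aeval_X]; rfl

lemma fst_apply' (p : Polynomial ℂ × Polynomial ℂ) :
    AlgHom.fst ℂ (Polynomial ℂ) (Polynomial ℂ) p = p.1 := rfl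

lemma snd_apply' (p : Polynomial ℂ × Polynomial ℂ) :
    AlgHom.snd ℂ (Polynomial ℂ) (Polynomial ℂ) p = p.2 := rfl

lemma key1 (A : P) : A - aeval ![(X 0 : P), 0] A ∈ Ideal.span ({X 1} : Set P) := by
  induction A using MvPolynomial.induction_on with
  | C c => simp
  | add p q hp hq => simpa [add_sub_add_comm] using Submodule.add_mem _ hp hq
  | mul_X p i hp =>
    fin_cases i
    · show p * X 0 - aeval ![(X 0 : P), 0] (p * X 0) ∈ _
      have h : p * X 0 - aeval ![(X 0 : P), 0] (p * X 0)
          = (p - aeval ![(X 0 : P), 0] p) * X 0 := by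
        simp [sub_mul]
      rw [h]
      exact Ideal.mul_mem_right _ _ hp
    · show p * X 1 - aeval ![(X 0 : P), 0] (p * X 1) ∈ _
      have h : p * X 1 - aeval ![(X 0 : P), 0] (p * X 1) = p * X 1 := by simp
      rw [h]
      exact Ideal.mul_mem_left _ _ (Ideal.subset_span rfl)

lemma key2 (A : P) : A - aeval ![0, (X 1 : P)] A ∈ Ideal.span ({X 0} : Set P) := by
  induction A using MvPolynomial.induction_on with
  | C c => simp
  | add p q hp hq => simpa [add_sub_add_comm] using Submodule.add_mem _ hp hq
  | mul_X p i hp =>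
    fin_cases i
    · show p * X 0 - aeval ![0, (X 1 : P)] (p * X 0) ∈ _
      have h : p * X 0 - aeval ![0, (X 1 : P)] (p * X 0) = p * X 0 := by simp
      rw [h]
      exact Ideal.mul_mem_left _ _ (Ideal.subset_span rfl)
    · show p * X 1 - aeval ![0, (X 1 : P)] (p * X 1) ∈ _
      have h : p * X 1 - aeval ![0, (X 1 : P)] (p * X 1)
          = (p - aeval ![0, (X 1 : P)] p) * X 1 := by
        simp [sub_mul]
      rw [h]
      exact Ideal.mul_mem_right _ _ hp

lemma fst_zero_of {a : T} (h : (φ a).1 = 0) : ∃ c : T, a = y * c := by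
  obtain ⟨A, rfl⟩ := Ideal.Quotient.mk_surjective a
  have hcomp : (Polynomial.aeval (X 0 : P)).comp
      ((AlgHom.fst ℂ (Polynomial ℂ) (Polynomial ℂ)).comp (aeval vmat))
      = aeval ![(X 0 : P), 0] := by
    apply MvPolynomial.algHom_ext
    intro i
    fin_cases i <;> simp [vmat, fst_apply', snd_apply']
  have h0 : aeval ![(X 0 : P), 0] A = 0 := by
    have := DFunLike.congr_fun hcomp A
    rw [← this]
    simp only [AlgHom.comp_apply, fst_apply']
    rw [φ_mk] at h
    rw [h, map_zero]
  have hmem : A ∈ Ideal.span ({X 1} : Set P) := by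
    have := key1 A
    rwa [h0, sub_zero] at this
  obtain ⟨C, hC⟩ := Ideal.mem_span_singleton.mp hmem
  exact ⟨Ideal.Quotient.mk _ C, by rw [hC, map_mul]; rfl⟩

lemma snd_zero_of {a : T} (h : (φ a).2 = 0) : ∃ c : T, a = x * c := by
  obtain ⟨A, rfl⟩ := Ideal.Quotient.mk_surjective a
  have hcomp : (Polynomial.aeval (X 1 : P)).comp
      ((AlgHom.snd ℂ (Polynomial ℂ) (Polynomial ℂ)).comp (aeval vmat))
      = aeval ![0, (X 1 : P)] := by
    apply MvPolynomial.algHom_ext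
    intro i
    fin_cases i <;> simp [vmat, fst_apply', snd_apply']
  have h0 : aeval ![0, (X 1 : P)] A = 0 := by
    have := DFunLike.congr_fun hcomp A
    rw [← this]
    simp only [AlgHom.comp_apply, snd_apply']
    rw [φ_mk] at h
    rw [h, map_zero]
  have hmem : A ∈ Ideal.span ({X 0} : Set P) := by
    have := key2 A
    rwa [h0, sub_zero] at this
  obtain ⟨C, hC⟩ := Ideal.mem_span_singleton.mp hmem
  exact ⟨Ideal.Quotient.mk _ C, by rw [hC, map_mul]; rfl⟩

theorem stmt_2 :
    (∀ v w : T × T, F (v + w) = F v + F w) ∧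
    (∀ (t : T) (v : T × T), F (t • v) = ((φ t).1 * (F v).1, (φ t).2 * (F v).2)) ∧
    Function.Surjective F ∧
    (∀ v : T × T, F v = 0 ↔ v ∈ rel ⊔ Submodule.span T {((0 : T), x)}) := by
  refine ⟨?_, ?_, ?_, ?_⟩
  · intro v w
    simp only [F, Prod.fst_add, Prod.snd_add, φ.map_add]
    rfl
  · intro t v
    simp only [F, Prod.smul_fst, Prod.smul_snd, smul_eq_mul, φ.map_mul]
    rfl
  · rintro ⟨p, q⟩
    refine ⟨(Ideal.Quotient.mk _ (Polynomial.aeval (X 0 : P) p),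
             Ideal.Quotient.mk _ (Polynomial.aeval (X 1 : P) q)), ?_⟩
    have h1 : (φ (Ideal.Quotient.mk _ (Polynomial.aeval (X 0 : P) p))).1 = p := by
      rw [φ_mk, ← Polynomial.aeval_algHom_apply (aeval vmat) (X 0) p, aeval_X,
        ← fst_apply', ← Polynomial.aeval_algHom_apply (AlgHom.fst ℂ (Polynomial ℂ) (Polynomial ℂ))
          (vmat 0) p]
      simp [vmat, fst_apply']
    have h2 : (φ (Ideal.Quotient.mk _ (Polynomial.aeval (X 1 : P) q))).2 = q := by
      rw [φ_mk, ← Polynomial.aeval_algHom_apply (aeval vmat) (X 1) q, aeval_X,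
        ← snd_apply', ← Polynomial.aeval_algHom_apply (AlgHom.snd ℂ (Polynomial ℂ) (Polynomial ℂ))
          (vmat 1) q]
      simp [vmat, snd_apply']
    simp [F, h1, h2]
  · intro v
    constructor
    · intro hv
      rw [Prod.ext_iff] at hv
      obtain ⟨c, hc⟩ := fst_zero_of hv.1
      obtain ⟨d, hd⟩ := snd_zero_of hv.2
      refine Submodule.mem_sup.mpr ⟨c • (y, x), Submodule.smul_mem _ _ (Submodule.subset_span rfl),
        (d - c) • ((0 : T), x), Submodule.smul_mem _ _ (Submodule.subset_span rfl), ?_⟩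
      have : v = (y * c, x * d) := Prod.ext hc hd
      rw [this]
      ext <;> simp [smul_eq_mul] <;> ring
    · intro hv
      obtain ⟨r, hr, w, hw, hrw⟩ := Submodule.mem_sup.mp hv
      obtain ⟨c, rfl⟩ := Submodule.mem_span_singleton.mp hr
      obtain ⟨d, rfl⟩ := Submodule.mem_span_singleton.mp hw
      rw [← hrw]
      simp only [F, Prod.fst_add, Prod.snd_add, Prod.smul_fst, Prod.smul_snd,
        smul_eq_mul, φ.map_add, φ.map_mul, φ_x, φ_y, Prod.fst_zero, Prod.snd_zero]
      simp
end
end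

section
/- The map d restricted to ker Δ is surjective onto ℂ[x,y]/(x, y) ≅ ℂ: i.e., there exists (f,g,h) ∈ ℂ[x,y]³ with −2y·f − (3x²+2x)·g + (x³+x²−y²)·h = 0 and ∂g/∂x − ∂f/∂y + h having nonzero constant term. -/
/- STATEMENT 9: There exists (f,g,h) ∈ ℂ[x,y]³ with
   −2y·f − (3x²+2x)·g + (x³+x²−y²)·h = 0 and with
   ∂g/∂x − ∂f/∂y + h having nonzero constant term (so the de Rham
   differential restricted to ker Δ surjects onto ℂ[x,y]/(x,y) ≅ ℂ). -/

noncomputable section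
open MvPolynomial

lemma pd_ofNat (i : Fin 2) (n : ℕ) [n.AtLeastTwo] :
    pderiv i ((OfNat.ofNat n : P)) = 0 := by
  rw [show ((OfNat.ofNat n : P)) = C (OfNat.ofNat n) from (map_ofNat C n).symm]
  simp

theorem stmt_9 :
    ∃ f g h : P,
      -(2 * X 1) * f - (3 * X 0 ^ 2 + 2 * X 0) * g
        + (X 0 ^ 3 + X 0 ^ 2 - X 1 ^ 2) * h = 0 ∧
      MvPolynomial.coeff 0 (pderiv 0 g - pderiv 1 f + h) ≠ 0 := by
  refine ⟨-3 * X 0 * X 1 - 2 * X 1, 2 * X 0 ^ 2 + 2 * X 0, 6 * X 0 + 4, by ring, ?_⟩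
  have : (pderiv 0 (2 * X 0 ^ 2 + 2 * X 0 : P) - pderiv 1 (-3 * X 0 * X 1 - 2 * X 1)
      + (6 * X 0 + 4)) = 13 * X 0 + 8 := by
    have e2 : ∀ i : Fin 2, pderiv i ((2:P)) = 0 := fun i => pd_ofNat i 2
    have e3 : ∀ i : Fin 2, pderiv i ((3:P)) = 0 := fun i => pd_ofNat i 3
    simp [pderiv_X, e2, e3]
    ring
  rw [this, show ((13:P)) = C 13 from (map_ofNat C 13).symm,
      show ((8:P)) = C 8 from (map_ofNat C 8).symm]
  simp [coeff_zero_X, coeff_C]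
end
end

section
/- Let T = ℂ[x,y]/(xy). The torsion submodule of the T-module Ω = (T·dx ⊕ T·dy)/(x·dy + y·dx) is exactly T·(x·dy), and the quotient Ω/T·(x·dy) is torsion-free. -/
/- STATEMENT 11: Let T = ℂ[x,y]/(xy) and Ω = (T·dx ⊕ T·dy)/(x·dy + y·dx).
   The torsion submodule of Ω is exactly T·(x·dy), and the quotient
   Ω/T·(x·dy) is torsion-free. -/

noncomputable section
open MvPolynomial

abbrev Ω := (T × T) ⧸ rel

/-- The class of x·dy. -/
def xdy : Ω := Submodule.Quotient.mk ((0 : T), x)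

namespace Stmt11Aux

lemma prime_X0 : Prime (X 0 : P) := by
  have h : Prime ((MvPolynomial.finSuccEquiv ℂ 1) (X 0 : P)) := by
    rw [MvPolynomial.finSuccEquiv_X_zero]; exact Polynomial.prime_X
  exact (MulEquiv.prime_iff (p := (X 0 : P))
    (MvPolynomial.finSuccEquiv ℂ 1).toRingEquiv.toMulEquiv).mp (by exact h)

lemma prime_X0' : Prime (X 0 : MvPolynomial (Fin 1) ℂ) := by
  have h : Prime ((MvPolynomial.finSuccEquiv ℂ 0) (X 0 : MvPolynomial (Fin 1) ℂ)) := by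
    rw [MvPolynomial.finSuccEquiv_X_zero]; exact Polynomial.prime_X
  exact (MulEquiv.prime_iff (p := (X 0 : MvPolynomial (Fin 1) ℂ))
    (MvPolynomial.finSuccEquiv ℂ 0).toRingEquiv.toMulEquiv).mp (by exact h)

lemma prime_X1 : Prime (X 1 : P) := by
  have h : Prime ((MvPolynomial.finSuccEquiv ℂ 1) (X 1 : P)) := by
    have h1 : (1 : Fin 2) = Fin.succ 0 := rfl
    rw [h1, MvPolynomial.finSuccEquiv_X_succ, Polynomial.prime_C_iff]
    exact prime_X0'
  exact (MulEquiv.prime_iff (p := (X 1 : P))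
    (MvPolynomial.finSuccEquiv ℂ 1).toRingEquiv.toMulEquiv).mp (by exact h)

lemma not_dvd_01 : ¬ (X 0 : P) ∣ X 1 := by
  rw [MvPolynomial.X_dvd_X]; decide

lemma not_dvd_10 : ¬ (X 1 : P) ∣ X 0 := by
  rw [MvPolynomial.X_dvd_X]; decide

lemma hxy : x * y = 0 := by
  show (Ideal.Quotient.mk _ (X 0)) * (Ideal.Quotient.mk _ (X 1)) = 0
  rw [← map_mul, Ideal.Quotient.eq_zero_iff_mem]
  exact Ideal.subset_span rfl

lemma hx0 : x ≠ 0 := by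
  intro h
  rw [show x = Ideal.Quotient.mk _ (X 0) from rfl, Ideal.Quotient.eq_zero_iff_mem,
    Ideal.mem_span_singleton] at h
  exact not_dvd_10 (dvd_trans (dvd_mul_left _ _) h)

lemma hy0 : y ≠ 0 := by
  intro h
  rw [show y = Ideal.Quotient.mk _ (X 1) from rfl, Ideal.Quotient.eq_zero_iff_mem,
    Ideal.mem_span_singleton] at h
  exact not_dvd_01 (dvd_trans (dvd_mul_right _ _) h)

lemma span_x_eq : Ideal.span ({x} : Set T) =
    Ideal.map (Ideal.Quotient.mk _) (Ideal.span ({X 0} : Set P)) := by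
  rw [Ideal.map_span, Set.image_singleton]; rfl

lemma span_y_eq : Ideal.span ({y} : Set T) =
    Ideal.map (Ideal.Quotient.mk _) (Ideal.span ({X 1} : Set P)) := by
  rw [Ideal.map_span, Set.image_singleton]; rfl

lemma ker_le_x : RingHom.ker (Ideal.Quotient.mk (Ideal.span ({X 0 * X 1} : Set P)))
    ≤ Ideal.span ({X 0} : Set P) := by
  rw [Ideal.mk_ker, Ideal.span_le, Set.singleton_subset_iff]
  exact Ideal.mem_span_singleton.mpr (dvd_mul_right _ _)

lemma ker_le_y : RingHom.ker (Ideal.Quotient.mk (Ideal.span ({X 0 * X 1} : Set P)))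
    ≤ Ideal.span ({X 1} : Set P) := by
  rw [Ideal.mk_ker, Ideal.span_le, Set.singleton_subset_iff]
  exact Ideal.mem_span_singleton.mpr (dvd_mul_left _ _)

lemma prime_span_x : (Ideal.span ({x} : Set T)).IsPrime := by
  rw [span_x_eq]
  have : (Ideal.span ({X 0} : Set P)).IsPrime :=
    (Ideal.span_singleton_prime (MvPolynomial.X_ne_zero 0)).mpr prime_X0
  exact Ideal.map_isPrime_of_surjective Ideal.Quotient.mk_surjective ker_le_x

lemma prime_span_y : (Ideal.span ({y} : Set T)).IsPrime := by
  rw [span_y_eq]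
  have : (Ideal.span ({X 1} : Set P)).IsPrime :=
    (Ideal.span_singleton_prime (MvPolynomial.X_ne_zero 1)).mpr prime_X1
  exact Ideal.map_isPrime_of_surjective Ideal.Quotient.mk_surjective ker_le_y

lemma nzd_not_mem_x {f : T} (hf : f ∈ nonZeroDivisors T) : f ∉ Ideal.span ({x} : Set T) := by
  intro h
  obtain ⟨a, ha⟩ := Ideal.mem_span_singleton'.mp h
  have : y * f = 0 := by rw [← ha]; linear_combination a * hxy
  exact hy0 (hf.2 y this)

lemma nzd_not_mem_y {f : T} (hf : f ∈ nonZeroDivisors T) : f ∉ Ideal.span ({y} : Set T) := by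
  intro h
  obtain ⟨a, ha⟩ := Ideal.mem_span_singleton'.mp h
  have : x * f = 0 := by rw [← ha]; linear_combination a * hxy
  exact hx0 (hf.2 x this)

/-- The submodule N = span{(y,x),(0,x)} of T². -/
def N : Submodule T (T × T) := Submodule.span T {((y, x) : T × T), ((0 : T), x)}

lemma mem_N {v : T × T} (h1 : v.1 ∈ Ideal.span ({y} : Set T))
    (h2 : v.2 ∈ Ideal.span ({x} : Set T)) : v ∈ N := by
  obtain ⟨a, ha⟩ := Ideal.mem_span_singleton'.mp h1
  obtain ⟨b, hb⟩ := Ideal.mem_span_singleton'.mp h2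
  have hyx : ((y, x) : T × T) ∈ N := Submodule.subset_span (by left; rfl)
  have h0x : (((0 : T), x) : T × T) ∈ N := Submodule.subset_span (by right; rfl)
  have : v = a • (((y, x) : T × T) - ((0 : T), x)) + b • (((0 : T), x) : T × T) := by
    obtain ⟨v1, v2⟩ := v
    simp only [Prod.ext_iff, Prod.smul_mk, Prod.mk_sub_mk, Prod.mk_add_mk, smul_eq_mul] at *
    constructor
    · rw [← ha]; ring
    · rw [← hb]; ring
  rw [this]
  exact N.add_mem (N.smul_mem a (N.sub_mem hyx h0x)) (N.smul_mem b h0x)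

lemma N_smul_free {f : T} (hf : f ∈ nonZeroDivisors T) {v : T × T}
    (h : f • v ∈ N) : v ∈ N := by
  obtain ⟨c, d, hcd⟩ := Submodule.mem_span_pair.mp h
  obtain ⟨v1, v2⟩ := v
  simp only [Prod.smul_mk, Prod.mk_add_mk, Prod.ext_iff, smul_eq_mul, mul_zero, zero_add,
    add_zero] at hcd
  obtain ⟨h1, h2⟩ := hcd
  have hv1 : f * v1 ∈ Ideal.span ({y} : Set T) :=
    Ideal.mem_span_singleton'.mpr ⟨c, h1⟩
  have hv2 : f * v2 ∈ Ideal.span ({x} : Set T) :=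
    Ideal.mem_span_singleton'.mpr ⟨c + d, by rw [← h2]; ring⟩
  have m1 : v1 ∈ Ideal.span ({y} : Set T) := by
    rcases prime_span_y.mem_or_mem hv1 with h | h
    · exact absurd h (nzd_not_mem_y hf)
    · exact h
  have m2 : v2 ∈ Ideal.span ({x} : Set T) := by
    rcases prime_span_x.mem_or_mem hv2 with h | h
    · exact absurd h (nzd_not_mem_x hf)
    · exact h
  exact mem_N m1 m2

lemma mem_span_xdy_iff (w : T × T) :
    (Submodule.Quotient.mk w : Ω) ∈ Submodule.span T {xdy} ↔ w ∈ N := by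
  have hspan : Submodule.span T {xdy} =
      Submodule.map rel.mkQ (Submodule.span T {(((0 : T), x) : T × T)}) := by
    rw [Submodule.map_span, Set.image_singleton]; rfl
  rw [hspan]
  constructor
  · intro h
    have : w ∈ Submodule.comap rel.mkQ
        (Submodule.map rel.mkQ (Submodule.span T {(((0 : T), x) : T × T)})) := h
    rw [Submodule.comap_map_mkQ] at this
    have heq : rel ⊔ Submodule.span T {(((0 : T), x) : T × T)} = N := by
      rw [rel, ← Submodule.span_union]
      congr 1
    rwa [heq] at this
  · intro h
    have heq : rel ⊔ Submodule.span T {(((0 : T), x) : T × T)} = N := by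
      rw [rel, ← Submodule.span_union]
      congr 1
    have : w ∈ Submodule.comap rel.mkQ
        (Submodule.map rel.mkQ (Submodule.span T {(((0 : T), x) : T × T)})) := by
      rw [Submodule.comap_map_mkQ, heq]; exact h
    exact this

lemma nzd_x_add_y : x + y ∈ nonZeroDivisors T := by
  rw [mem_nonZeroDivisors_iff_right]
  intro g hg
  obtain ⟨G, rfl⟩ := Ideal.Quotient.mk_surjective g
  have : (Ideal.Quotient.mk _ (G * (X 0 + X 1)) : T) = 0 := by
    rw [map_mul, map_add]; exact hg
  rw [Ideal.Quotient.eq_zero_iff_mem, Ideal.mem_span_singleton] at this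
  have h1 : (X 1 : P) ∣ G := by
    have : (X 1 : P) ∣ G * (X 0 + X 1) := dvd_trans (dvd_mul_left _ _) this
    rcases prime_X1.2.2 _ _ this with h | h
    · exact h
    · exfalso
      apply not_dvd_10
      have h2 : (X 1 : P) ∣ (X 0 + X 1) - X 1 := dvd_sub h dvd_rfl
      simpa using h2
  obtain ⟨H, rfl⟩ := h1
  have h0 : (X 0 : P) ∣ H := by
    have hd : (X 0 : P) ∣ H * (X 0 + X 1) := by
      have hX1 : (X 1 : P) ≠ 0 := MvPolynomial.X_ne_zero 1
      obtain ⟨Q, hQ⟩ := this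
      refine ⟨Q, ?_⟩
      apply mul_left_cancel₀ hX1
      linear_combination hQ
    rcases prime_X0.2.2 _ _ hd with h | h
    · exact h
    · exfalso
      apply not_dvd_01
      have h2 : (X 0 : P) ∣ (X 0 + X 1) - X 0 := dvd_sub h dvd_rfl
      simpa using h2
  obtain ⟨K, rfl⟩ := h0
  rw [Ideal.Quotient.eq_zero_iff_mem, Ideal.mem_span_singleton]
  exact ⟨K, by ring⟩

lemma smul_xdy : (x + y) • xdy = 0 := by
  rw [xdy, ← Submodule.Quotient.mk_smul, Submodule.Quotient.mk_eq_zero]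
  rw [rel]
  refine Submodule.mem_span_singleton.mpr ⟨x, ?_⟩
  simp only [Prod.smul_mk, Prod.ext_iff, smul_eq_mul, Prod.mk.injEq]
  constructor
  · linear_combination hxy
  · linear_combination -hxy

lemma xdy_torsion : xdy ∈ Submodule.torsion T Ω :=
  ⟨⟨x + y, nzd_x_add_y⟩, smul_xdy⟩

end Stmt11Aux

open Stmt11Aux in
theorem stmt_11 :
    Submodule.torsion T Ω = Submodule.span T {xdy} ∧
    Submodule.torsion T (Ω ⧸ Submodule.span T {xdy}) = ⊥ := by
  have part2 : Submodule.torsion T (Ω ⧸ Submodule.span T {xdy}) = ⊥ := by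
    rw [eq_bot_iff]
    intro m hm
    obtain ⟨f, hf⟩ := hm
    obtain ⟨w, rfl⟩ := Submodule.Quotient.mk_surjective _ m
    obtain ⟨v, rfl⟩ := Submodule.Quotient.mk_surjective _ w
    rw [← Submodule.Quotient.mk_smul, ← Submodule.Quotient.mk_smul,
      Submodule.Quotient.mk_eq_zero] at hf
    rw [mem_span_xdy_iff] at hf
    have hv : v ∈ N := N_smul_free f.2 hf
    rw [Submodule.mem_bot, Submodule.Quotient.mk_eq_zero]
    exact (mem_span_xdy_iff v).mpr hv
  refine ⟨le_antisymm ?_ ?_, part2⟩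
  · intro m hm
    obtain ⟨f, hf⟩ := hm
    rw [Submonoid.smul_def] at hf
    have : (f : T) • ((Submodule.span T {xdy}).mkQ m) = 0 := by
      rw [← map_smul, hf, map_zero]
    have htor : (Submodule.span T {xdy}).mkQ m ∈
        Submodule.torsion T (Ω ⧸ Submodule.span T {xdy}) := ⟨f, this⟩
    rw [part2, Submodule.mem_bot] at htor
    rwa [Submodule.mkQ_apply, Submodule.Quotient.mk_eq_zero] at htor
  · rw [Submodule.span_le, Set.singleton_subset_iff]
    exact xdy_torsion
end
end

section
/- Let T = ℂ[x,y]/(xy) and let Ω = (T·dx ⊕ T·dy)/(x·dy+y·dx). Every element of Ω can be written uniquely as f₁(x)·dx + f₂(y)·dy + c·(x·dy) with f₁ ∈ ℂ[x], f₂ ∈ ℂ[y], c ∈ ℂ. -/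
/- STATEMENT 17: Let T = ℂ[x,y]/(xy) and Ω = (T·dx ⊕ T·dy)/(x·dy+y·dx).
   Every element of Ω can be written uniquely as
   f₁(x)·dx + f₂(y)·dy + c·(x·dy) with f₁ ∈ ℂ[x], f₂ ∈ ℂ[y], c ∈ ℂ. -/

noncomputable section
open MvPolynomial

lemma hxy : x * y = 0 := by
  rw [x, y, ← map_mul, Ideal.Quotient.eq_zero_iff_mem]
  exact Ideal.subset_span rfl

def πx : T →ₐ[ℂ] Polynomial ℂ :=
  Ideal.Quotient.liftₐ _ (MvPolynomial.aeval ![Polynomial.X, 0]) (by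
    intro a ha
    rw [Ideal.mem_span_singleton] at ha
    obtain ⟨q, rfl⟩ := ha
    simp)

def πy : T →ₐ[ℂ] Polynomial ℂ :=
  Ideal.Quotient.liftₐ _ (MvPolynomial.aeval ![0, Polynomial.X]) (by
    intro a ha
    rw [Ideal.mem_span_singleton] at ha
    obtain ⟨q, rfl⟩ := ha
    simp)

lemma πx_mk (p : P) : πx (Ideal.Quotient.mk _ p) = MvPolynomial.aeval ![Polynomial.X, 0] p :=
  Ideal.Quotient.lift_mk _ _ _
lemma πy_mk (p : P) : πy (Ideal.Quotient.mk _ p) = MvPolynomial.aeval ![0, Polynomial.X] p :=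
  Ideal.Quotient.lift_mk _ _ _

@[simp] lemma πx_x : πx x = Polynomial.X := by
  simp [πx_mk, x]
@[simp] lemma πx_y : πx y = 0 := by
  simp [πx_mk, y]
@[simp] lemma πy_y : πy y = Polynomial.X := by
  simp [πy_mk, y]
@[simp] lemma πy_x : πy x = 0 := by
  simp [πy_mk, x]

lemma coeff0 (t : T) : (πx t).coeff 0 = (πy t).coeff 0 := by
  obtain ⟨p, rfl⟩ := Ideal.Quotient.mk_surjective t
  rw [Polynomial.coeff_zero_eq_eval_zero, Polynomial.coeff_zero_eq_eval_zero]
  show (Polynomial.evalRingHom 0) (πx _) = (Polynomial.evalRingHom 0) (πy _)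
  simp only [πx_mk, πy_mk]
  rw [MvPolynomial.map_aeval, MvPolynomial.map_aeval]
  apply MvPolynomial.eval₂Hom_congr rfl _ rfl
  funext i
  fin_cases i <;> simp

lemma decomp_poly (p : P) :
    ∃ r : P, p = Polynomial.aeval (X 0 : P) ((MvPolynomial.aeval ![Polynomial.X, 0] p : Polynomial ℂ)) + X 1 * r := by
  induction p using MvPolynomial.induction_on with
  | C a => exact ⟨0, by simp⟩
  | add p q hp hq =>
    obtain ⟨r, hr⟩ := hp; obtain ⟨s, hs⟩ := hq
    refine ⟨r + s, ?_⟩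
    simp only [map_add]
    conv_lhs => rw [hr, hs]
    ring
  | mul_X p i hp =>
    obtain ⟨r, hr⟩ := hp
    fin_cases i
    · refine ⟨r * X 0, ?_⟩
      simp only [Fin.mk_zero, Fin.isValue, map_mul, MvPolynomial.aeval_X,
        Matrix.cons_val_zero, Polynomial.aeval_X]
      conv_lhs => rw [hr]
      ring
    · refine ⟨p, ?_⟩
      simp only [Fin.mk_one, Fin.isValue, map_mul, MvPolynomial.aeval_X,
        Matrix.cons_val_one, Matrix.head_cons, Matrix.cons_val_zero, mul_zero, map_zero, zero_add]
      exact mul_comm p (X 1)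

lemma decomp_poly' (p : P) :
    ∃ r : P, p = Polynomial.aeval (X 1 : P) ((MvPolynomial.aeval ![0, Polynomial.X] p : Polynomial ℂ)) + X 0 * r := by
  induction p using MvPolynomial.induction_on with
  | C a => exact ⟨0, by simp⟩
  | add p q hp hq =>
    obtain ⟨r, hr⟩ := hp; obtain ⟨s, hs⟩ := hq
    refine ⟨r + s, ?_⟩
    simp only [map_add]
    conv_lhs => rw [hr, hs]
    ring
  | mul_X p i hp =>
    obtain ⟨r, hr⟩ := hp
    fin_cases i
    · refine ⟨p, ?_⟩
      simp only [Fin.mk_zero, Fin.isValue, map_mul, MvPolynomial.aeval_X,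
        Matrix.cons_val_zero, mul_zero, map_zero, zero_add]
      exact mul_comm p (X 0)
    · refine ⟨r * X 1, ?_⟩
      simp only [Fin.mk_one, Fin.isValue, map_mul, MvPolynomial.aeval_X,
        Matrix.cons_val_one, Matrix.head_cons, Matrix.cons_val_zero, Polynomial.aeval_X]
      conv_lhs => rw [hr]
      ring

lemma mk_aeval_x (q : Polynomial ℂ) :
    Ideal.Quotient.mk (Ideal.span ({X 0 * X 1} : Set P)) (Polynomial.aeval (X 0 : P) q)
      = Polynomial.aeval x q := by
  have := Polynomial.aeval_algHom_apply
    (Ideal.Quotient.mkₐ ℂ (Ideal.span ({X 0 * X 1} : Set P))) (X 0 : P) q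
  simpa [Ideal.Quotient.mkₐ_eq_mk, x] using this.symm

lemma mk_aeval_y (q : Polynomial ℂ) :
    Ideal.Quotient.mk (Ideal.span ({X 0 * X 1} : Set P)) (Polynomial.aeval (X 1 : P) q)
      = Polynomial.aeval y q := by
  have := Polynomial.aeval_algHom_apply
    (Ideal.Quotient.mkₐ ℂ (Ideal.span ({X 0 * X 1} : Set P))) (X 1 : P) q
  simpa [Ideal.Quotient.mkₐ_eq_mk, y] using this.symm

lemma decompX (a : T) : ∃ r : T, a = Polynomial.aeval x (πx a) + y * r := by
  obtain ⟨p, rfl⟩ := Ideal.Quotient.mk_surjective a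
  obtain ⟨r, hr⟩ := decomp_poly p
  refine ⟨Ideal.Quotient.mk _ r, ?_⟩
  have hπ : πx (Ideal.Quotient.mk _ p) = MvPolynomial.aeval ![Polynomial.X, 0] p := by
    exact πx_mk p
  rw [hπ]
  conv_lhs => rw [hr]
  rw [map_add, map_mul, mk_aeval_x]
  rfl

lemma decompY (b : T) : ∃ s : T, b = Polynomial.aeval y (πy b) + x * s := by
  obtain ⟨p, rfl⟩ := Ideal.Quotient.mk_surjective b
  obtain ⟨s, hs⟩ := decomp_poly' p
  refine ⟨Ideal.Quotient.mk _ s, ?_⟩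
  have hπ : πy (Ideal.Quotient.mk _ p) = MvPolynomial.aeval ![0, Polynomial.X] p := by
    exact πy_mk p
  rw [hπ]
  conv_lhs => rw [hs]
  rw [map_add, map_mul, mk_aeval_y]
  rfl

@[simp] lemma πx_aeval_x (q : Polynomial ℂ) : πx (Polynomial.aeval x q) = q := by
  rw [← Polynomial.aeval_algHom_apply, πx_x, Polynomial.aeval_X_left_apply]

@[simp] lemma πy_aeval_y (q : Polynomial ℂ) : πy (Polynomial.aeval y q) = q := by
  rw [← Polynomial.aeval_algHom_apply, πy_y, Polynomial.aeval_X_left_apply]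

@[simp] lemma πy_aeval_x (q : Polynomial ℂ) :
    πy (Polynomial.aeval x q) = Polynomial.C (q.coeff 0) := by
  rw [← Polynomial.aeval_algHom_apply, πy_x, Polynomial.aeval_def, Polynomial.eval₂_at_zero]
  rfl

@[simp] lemma πx_aeval_y (q : Polynomial ℂ) :
    πx (Polynomial.aeval y q) = Polynomial.C (q.coeff 0) := by
  rw [← Polynomial.aeval_algHom_apply, πx_y, Polynomial.aeval_def, Polynomial.eval₂_at_zero]
  rfl

lemma aeval_x_mul_y (q : Polynomial ℂ) : (Polynomial.aeval x q) * y = q.coeff 0 • y := by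
  conv_lhs => rw [← Polynomial.X_mul_divX_add q]
  rw [map_add, map_mul, Polynomial.aeval_X, Polynomial.aeval_C, add_mul,
    mul_right_comm, hxy, zero_mul, zero_add, ← Algebra.smul_def]

lemma aeval_y_mul_x (q : Polynomial ℂ) : (Polynomial.aeval y q) * x = q.coeff 0 • x := by
  conv_lhs => rw [← Polynomial.X_mul_divX_add q]
  rw [map_add, map_mul, Polynomial.aeval_X, Polynomial.aeval_C, add_mul,
    mul_right_comm, mul_comm y x, hxy, zero_mul, zero_add, ← Algebra.smul_def]

lemma coeff_one_X_mul (p : Polynomial ℂ) : (Polynomial.X * p).coeff 1 = p.coeff 0 := by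
  simp [Polynomial.coeff_X_mul p 0]

lemma coeff_one_mul_X (p : Polynomial ℂ) : (p * Polynomial.X).coeff 1 = p.coeff 0 := by
  simp [Polynomial.coeff_mul_X p 0]

set_option maxHeartbeats 1000000 in
theorem stmt_17 :
    ∀ m : Ω, ∃! t : Polynomial ℂ × Polynomial ℂ × ℂ,
      m = Submodule.Quotient.mk
        ((Polynomial.aeval x) t.1, (Polynomial.aeval y) t.2.1 + t.2.2 • x) := by
  intro m
  obtain ⟨⟨a, b⟩, rfl⟩ := Submodule.Quotient.mk_surjective rel m
  obtain ⟨r, hr⟩ := decompX a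
  obtain ⟨s, hs⟩ := decompY b
  have hπxb : (πx b).coeff 1 = (πx s).coeff 0 := by
    conv_lhs => rw [hs]
    rw [map_add, map_mul, πx_aeval_y, πx_x]
    simp [coeff_one_X_mul]
  have hπya : (πy a).coeff 1 = (πy r).coeff 0 := by
    conv_lhs => rw [hr]
    rw [map_add, map_mul, πy_aeval_x, πy_y]
    simp [coeff_one_X_mul]
  refine ⟨(πx a, πy b, (πx s).coeff 0 - (πy r).coeff 0), ?_, ?_⟩
  · dsimp only
    rw [Submodule.Quotient.eq]
    refine Submodule.mem_span_singleton.2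
      ⟨Polynomial.aeval y (πy r) + Polynomial.aeval x (πx s)
        - algebraMap ℂ T ((πx s).coeff 0), ?_⟩
    obtain ⟨w, hw⟩ := decompY r
    obtain ⟨v, hv⟩ := decompX s
    have h1 : y * r = Polynomial.aeval y (πy r) * y := by
      conv_lhs => rw [hw]
      rw [mul_add, ← mul_assoc, mul_comm y x, hxy, zero_mul, add_zero, mul_comm]
    have h2 : x * s = Polynomial.aeval x (πx s) * x := by
      conv_lhs => rw [hv]
      rw [mul_add, ← mul_assoc, hxy, zero_mul, add_zero, mul_comm]
    rw [Prod.smul_mk, Prod.mk_sub_mk, Prod.mk.injEq]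
    constructor
    · rw [smul_eq_mul, sub_mul, add_mul, aeval_x_mul_y, ← Algebra.smul_def,
        add_sub_cancel_right, ← h1, eq_sub_iff_add_eq, add_comm]
      exact hr.symm
    · rw [smul_eq_mul, sub_mul, add_mul, aeval_y_mul_x, ← Algebra.smul_def]
      have hb'' : b - Polynomial.aeval y (πy b) = x * s := by
        rw [sub_eq_iff_eq_add, add_comm]; exact hs
      rw [sub_add_eq_sub_sub, hb'', h2, sub_smul]
      abel
  · rintro ⟨f₁', f₂', c'⟩ ht'
    rw [Submodule.Quotient.eq] at ht'
    obtain ⟨t₀, ht₀⟩ := Submodule.mem_span_singleton.1 ht'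
    rw [Prod.smul_mk, Prod.mk_sub_mk, Prod.mk.injEq] at ht₀
    obtain ⟨ht1, ht2⟩ := ht₀
    dsimp only at ht1 ht2
    rw [smul_eq_mul] at ht1 ht2
    have ha : a = Polynomial.aeval x f₁' + t₀ * y := by rw [ht1]; abel
    have hb : b = Polynomial.aeval y f₂' + c' • x + t₀ * x := by rw [ht2]; abel
    have e1 : πx a = f₁' := by
      rw [ha, map_add, map_mul, πx_y, mul_zero, add_zero, πx_aeval_x]
    have e2 : πy b = f₂' := by
      rw [hb, map_add, map_add, map_mul, πy_x, mul_zero, add_zero,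
        map_smul, πy_x, smul_zero, add_zero, πy_aeval_y]
    have e3 : (πx s).coeff 0 - (πy r).coeff 0 = c' := by
      rw [← hπxb, ← hπya, hb, ha]
      rw [map_add, map_add, map_mul, πx_x, map_smul, πx_x, πx_aeval_y]
      rw [map_add, map_mul, πy_y, πy_aeval_x]
      simp only [Polynomial.coeff_add, Polynomial.coeff_smul, coeff_one_mul_X,
        Polynomial.coeff_C, smul_eq_mul, Polynomial.coeff_X_one]
      rw [coeff0 t₀]
      norm_num
    simp only [Prod.mk.injEq]
    exact ⟨e1.symm, e2.symm, e3.symm⟩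
end
end
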